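/- arXiv:2401.05286 — 7 statements merged into one kernel-verified Lean document; each statement's English description precedes it below -/
import Mathlib

section
/- Let R be a finite chain ring with maximal ideal generated by γ of nilpotency index s, residue field of size p^m. Then any nonzero polynomial f ∈ R[x] of degree n has at most n·p^{(s-1)m} roots in R. -/
open IsLocalRing Polynomial Finset
open scoped Classical

/-- One step of the filtration count: |(γ^i)| ≤ |(γ^(i+1))| * |k|. -/
private lemma chain_step {R : Type*} [CommRing R] [IsLocalRing R] [Fintype R] [DecidableEq R]
    (γ : R) (p m : ℕ)
    (hmax : IsLocalRing.maximalIdeal R = Ideal.span {γ})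
    (hres : Nat.card (IsLocalRing.ResidueField R) = p ^ m) (i : ℕ) :
    (Finset.univ.filter (fun x : R => x ∈ Ideal.span {γ ^ i})).card ≤
      (Finset.univ.filter (fun x : R => x ∈ Ideal.span {γ ^ (i + 1)})).card * p ^ m := by
  classical
  have hksurj := IsLocalRing.residue_surjective (R := R)
  have hkfin : Finite (IsLocalRing.ResidueField R) := Finite.of_surjective _ hksurj
  have hkfint : Fintype (IsLocalRing.ResidueField R) := Fintype.ofFinite _
  set σ : IsLocalRing.ResidueField R → R := Function.surjInv hksurj with hσ
  have hσspec : ∀ a, IsLocalRing.residue R (σ a) = a := fun a => Function.surjInv_eq hksurj a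
  set I : Ideal R := Ideal.span {γ ^ (i + 1)} with hI
  set π : R →+* R ⧸ I := Ideal.Quotient.mk I with hπ
  set Z : Finset (R ⧸ I) := Finset.image (fun a => π (γ ^ i * σ a)) Finset.univ with hZ
  have hZcard : Z.card ≤ p ^ m := by
    calc Z.card ≤ (Finset.univ : Finset (IsLocalRing.ResidueField R)).card :=
          Finset.card_image_le
    _ = p ^ m := by rw [Finset.card_univ, ← Nat.card_eq_fintype_card, hres]
  have hmaps : ∀ x ∈ Finset.univ.filter (fun x : R => x ∈ Ideal.span {γ ^ i}), π x ∈ Z := by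
    intro x hx
    rw [Finset.mem_filter] at hx
    obtain ⟨r, hr⟩ := Ideal.mem_span_singleton.mp hx.2
    refine Finset.mem_image.mpr ⟨IsLocalRing.residue R r, Finset.mem_univ _, ?_⟩
    rw [hr]
    symm
    rw [Ideal.Quotient.mk_eq_mk_iff_sub_mem]
    have hmem : r - σ (IsLocalRing.residue R r) ∈ IsLocalRing.maximalIdeal R := by
      have : IsLocalRing.residue R (r - σ (IsLocalRing.residue R r)) = 0 := by
        rw [map_sub, hσspec, sub_self]
      exact Ideal.Quotient.eq_zero_iff_mem.mp this
    rw [hmax, Ideal.mem_span_singleton] at hmem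
    obtain ⟨c, hc⟩ := hmem
    rw [hI, Ideal.mem_span_singleton]
    refine ⟨c, ?_⟩
    rw [← mul_sub, hc, pow_succ, mul_assoc]
  have hfiber : ∀ q ∈ Z,
      ((Finset.univ.filter (fun x : R => x ∈ Ideal.span {γ ^ i})).filter
        (fun x => π x = q)).card ≤
      (Finset.univ.filter (fun x : R => x ∈ Ideal.span {γ ^ (i + 1)})).card := by
    intro q _
    set F := (Finset.univ.filter (fun x : R => x ∈ Ideal.span {γ ^ i})).filter
        (fun x => π x = q) with hF
    rcases F.eq_empty_or_nonempty with h | ⟨x0, hx0⟩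
    · simp [h]
    · apply Finset.card_le_card_of_injOn (fun x => x - x0)
      · intro x hx
        rw [Finset.mem_coe] at hx
        rw [hF, Finset.mem_filter, Finset.mem_filter] at hx hx0
        rw [Finset.mem_coe, Finset.mem_filter]
        refine ⟨Finset.mem_univ _, ?_⟩
        have : π x = π x0 := by rw [hx.2, hx0.2]
        rw [hπ, Ideal.Quotient.mk_eq_mk_iff_sub_mem] at this
        exact this
      · intro a _ b _ hab
        simpa using congrArg (· + x0) hab
  calc (Finset.univ.filter (fun x : R => x ∈ Ideal.span {γ ^ i})).card
      ≤ (Finset.univ.filter (fun x : R => x ∈ Ideal.span {γ ^ (i + 1)})).card * Z.card :=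
        Finset.card_le_mul_card_image_of_maps_to hmaps _ hfiber
    _ ≤ _ := Nat.mul_le_mul_left _ hZcard

private lemma chain_count {R : Type*} [CommRing R] [IsLocalRing R] [Fintype R] [DecidableEq R]
    (γ : R) (s p m : ℕ)
    (hmax : IsLocalRing.maximalIdeal R = Ideal.span {γ})
    (hnilp : γ ^ s = 0)
    (hres : Nat.card (IsLocalRing.ResidueField R) = p ^ m) :
    ∀ j, j ≤ s →
      (Finset.univ.filter (fun x : R => x ∈ Ideal.span {γ ^ (s - j)})).card ≤ p ^ (m * j) := by
  intro j
  induction j with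
  | zero =>
    intro _
    have : (Finset.univ.filter (fun x : R => x ∈ Ideal.span {γ ^ (s - 0)})) = {0} := by
      ext x
      simp [hnilp, Ideal.mem_span_singleton, zero_dvd_iff]
    rw [this]
    simp
  | succ j ih =>
    intro hj
    have hlt : j ≤ s := le_of_lt (Nat.lt_of_succ_le hj)
    have heq : s - (j + 1) + 1 = s - j := by omega
    calc (Finset.univ.filter (fun x : R => x ∈ Ideal.span {γ ^ (s - (j + 1))})).card
        ≤ (Finset.univ.filter
            (fun x : R => x ∈ Ideal.span {γ ^ (s - (j + 1) + 1)})).card * p ^ m :=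
          chain_step γ p m hmax hres _
      _ = (Finset.univ.filter (fun x : R => x ∈ Ideal.span {γ ^ (s - j)})).card * p ^ m := by
          rw [heq]
      _ ≤ p ^ (m * j) * p ^ m := Nat.mul_le_mul_right _ (ih hlt)
      _ = p ^ (m * (j + 1)) := by rw [← pow_add]; ring_nf

/-- In a finite chain ring R with maximal ideal (γ) of nilpotency index s and residue field of
size p^m, any nonzero polynomial of degree n has at most n·p^{(s-1)m} roots in R. -/
theorem stmt4 (R : Type*) [CommRing R] [IsLocalRing R] [Fintype R] [DecidableEq R]
    [IsPrincipalIdealRing R]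
    (γ : R) (s p m n : ℕ) (hp : p.Prime)
    (hmax : IsLocalRing.maximalIdeal R = Ideal.span {γ})
    (hnilp : γ ^ s = 0) (hnilp' : γ ^ (s - 1) ≠ 0)
    (hres : Nat.card (IsLocalRing.ResidueField R) = p ^ m)
    (f : Polynomial R) (hf : f ≠ 0) (hdeg : f.natDegree = n) :
    (Finset.univ.filter (fun x : R => f.eval x = 0)).card ≤ n * p ^ ((s - 1) * m) := by
  classical
  -- s ≥ 1
  have hs : 1 ≤ s := by
    rcases Nat.eq_zero_or_pos s with h | h
    · exfalso; rw [h] at hnilp hnilp'; exact hnilp' hnilp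
    · exact h
  have hfex : ∃ i, f.coeff i ≠ 0 := by
    by_contra h
    push_neg at h
    exact hf (Polynomial.ext fun j => by simp [h j])
  -- γ^(s-1+1) = 0
  have hnil' : γ ^ (s - 1 + 1) = 0 := by rw [Nat.sub_add_cancel hs]; exact hnilp
  -- choose minimal t with some coefficient not in (γ^(t+1))
  have hex : ∃ t : ℕ, ∃ i, f.coeff i ∉ Ideal.span {γ ^ (t + 1)} := by
    obtain ⟨i, hi⟩ := hfex
    refine ⟨s - 1, i, ?_⟩
    rw [hnil']
    simp [Ideal.span_singleton_eq_bot.mpr rfl, Ideal.mem_bot, hi]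
  set t := Nat.find hex with ht_def
  obtain ⟨i0, hi0⟩ := Nat.find_spec hex
  rw [← ht_def] at hi0
  have ht_le : t ≤ s - 1 := by
    apply Nat.find_le
    obtain ⟨i, hi⟩ := hfex
    refine ⟨i, ?_⟩
    rw [hnil']
    simp [Ideal.span_singleton_eq_bot.mpr rfl, Ideal.mem_bot, hi]
  have hall : ∀ j, γ ^ t ∣ f.coeff j := by
    intro j
    rw [← Ideal.mem_span_singleton]
    rcases Nat.eq_zero_or_pos t with h0 | hpos
    · rw [h0, pow_zero, Ideal.span_singleton_one]; trivial
    · have hmin := Nat.find_min hex (m := t - 1) (by rw [← ht_def]; omega)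
      push_neg at hmin
      have h := hmin j
      have ht1 : t - 1 + 1 = t := by omega
      rwa [ht1] at h
  -- construct g with f = C (γ^t) * g
  set d : ℕ → R := fun j => if h : f.coeff j = 0 then 0 else (hall j).choose with hd
  have hdspec : ∀ j, f.coeff j = γ ^ t * d j := by
    intro j
    by_cases h : f.coeff j = 0
    · simp [hd, h]
    · simp only [hd, dif_neg h]
      exact (hall j).choose_spec
  set g : Polynomial R := ⟨AddMonoidAlgebra.ofCoeff (Finsupp.onFinset f.support d (by
      intro j hj
      rw [Polynomial.mem_support_iff]
      intro h
      apply hj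
      simp [hd, h]))⟩ with hg
  have hgcoeff : ∀ j, g.coeff j = d j := fun j => rfl
  have hfg : f = Polynomial.C (γ ^ t) * g := by
    ext j
    rw [Polynomial.coeff_C_mul, hgcoeff]
    exact hdspec j
  have hgdeg : g.natDegree ≤ n := by
    rw [Polynomial.natDegree_le_iff_coeff_eq_zero]
    intro N hN
    have : f.coeff N = 0 := Polynomial.coeff_eq_zero_of_natDegree_lt (hdeg ▸ hN)
    rw [hgcoeff]
    simp [hd, this]
  -- γ^t ≠ 0
  have htne : γ ^ t ≠ 0 := by
    intro h
    apply hnilp'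
    have : γ ^ (s - 1) = γ ^ t * γ ^ (s - 1 - t) := by
      rw [← pow_add, Nat.add_sub_cancel' ht_le]
    rw [this, h, zero_mul]
  -- residue field setup
  have hksurj := IsLocalRing.residue_surjective (R := R)
  set φ := IsLocalRing.residue R with hφ
  set gbar := g.map φ with hgbar
  have hgbar_ne : gbar ≠ 0 := by
    have hco : gbar.coeff i0 ≠ 0 := by
      rw [hgbar, Polynomial.coeff_map]
      intro h
      apply hi0
      have hmem : g.coeff i0 ∈ IsLocalRing.maximalIdeal R := Ideal.Quotient.eq_zero_iff_mem.mp h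
      rw [hmax, Ideal.mem_span_singleton] at hmem
      obtain ⟨c, hc⟩ := hmem
      rw [Ideal.mem_span_singleton]
      refine ⟨c, ?_⟩
      rw [hdspec i0, ← hgcoeff i0, hc, pow_succ, mul_assoc]
    intro h
    rw [h] at hco
    simp at hco
  -- roots of f map to roots of gbar
  have hroot : ∀ x : R, f.eval x = 0 → gbar.eval (φ x) = 0 := by
    intro x hx
    have hx' : γ ^ t * g.eval x = 0 := by
      rw [hfg] at hx
      simpa using hx
    have hmem : g.eval x ∈ IsLocalRing.maximalIdeal R := by
      by_contra h
      have hu : IsUnit (g.eval x) := by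
        by_contra h'
        exact h (IsLocalRing.mem_maximalIdeal _ |>.mpr h')
      obtain ⟨v, hv⟩ := hu
      apply htne
      calc γ ^ t = γ ^ t * g.eval x * ↑v⁻¹ := by
            rw [← hv, mul_assoc, Units.mul_inv, mul_one]
        _ = 0 := by rw [hx', zero_mul]
    have : φ (g.eval x) = 0 := Ideal.Quotient.eq_zero_iff_mem.mpr hmem
    rw [hgbar, Polynomial.eval_map, Polynomial.eval₂_hom, this]
  -- count
  set Z := gbar.roots.toFinset with hZ
  have hZcard : Z.card ≤ n := by
    calc Z.card ≤ Multiset.card gbar.roots := gbar.roots.toFinset_card_le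
      _ ≤ gbar.natDegree := Polynomial.card_roots' gbar
      _ ≤ g.natDegree := Polynomial.natDegree_map_le
      _ ≤ n := hgdeg
  have hmaps : ∀ x ∈ Finset.univ.filter (fun x : R => f.eval x = 0), φ x ∈ Z := by
    intro x hx
    rw [Finset.mem_filter] at hx
    rw [hZ, Multiset.mem_toFinset, Polynomial.mem_roots hgbar_ne]
    exact hroot x hx.2
  set M := (Finset.univ.filter (fun x : R => x ∈ Ideal.span {γ ^ 1})).card with hM
  have hfiber : ∀ q ∈ Z,
      ((Finset.univ.filter (fun x : R => f.eval x = 0)).filter (fun x => φ x = q)).card ≤ M := by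
    intro q _
    set F := (Finset.univ.filter (fun x : R => f.eval x = 0)).filter (fun x => φ x = q) with hF
    rcases F.eq_empty_or_nonempty with h | ⟨x0, hx0⟩
    · simp [h]
    · apply Finset.card_le_card_of_injOn (fun x => x - x0)
      · intro x hx
        rw [Finset.mem_coe] at hx
        rw [hF, Finset.mem_filter] at hx hx0
        rw [Finset.mem_coe, Finset.mem_filter]
        refine ⟨Finset.mem_univ _, ?_⟩
        rw [pow_one, ← hmax]
        apply Ideal.Quotient.eq_zero_iff_mem.mp
        show φ (x - x0) = 0
        rw [map_sub, hx.2, hx0.2, sub_self]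
      · intro a _ b _ hab
        simpa using congrArg (· + x0) hab
  have hMle : M ≤ p ^ (m * (s - 1)) := by
    have := chain_count γ s p m hmax hnilp hres (s - 1) (Nat.sub_le s 1)
    have hrw : s - (s - 1) = 1 := by omega
    rw [hrw] at this
    exact this
  calc (Finset.univ.filter (fun x : R => f.eval x = 0)).card
      ≤ M * Z.card := Finset.card_le_mul_card_image_of_maps_to hmaps M hfiber
    _ ≤ p ^ (m * (s - 1)) * n := Nat.mul_le_mul hMle hZcard
    _ = n * p ^ ((s - 1) * m) := by rw [mul_comm, Nat.mul_comm m]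
end

section
/- Every code C ⊆ A^n over a finite alphabet A with locality r satisfies κ/n ≤ r/(r+1), where κ is the minimum size of an information set of C. -/
open Finset

/-- `i` is functionally determined by coordinates in `T` for codewords in `C`. -/
def DetAux {n : ℕ} {A : Type*} (C : Finset (Fin n → A)) (T : Finset (Fin n)) (i : Fin n) : Prop :=
  ∀ c ∈ C, ∀ d ∈ C, (∀ j ∈ T, c j = d j) → c i = d i

noncomputable def clAux {n : ℕ} {A : Type*} (C : Finset (Fin n → A)) (T : Finset (Fin n)) :
    Finset (Fin n) :=
  @Finset.filter _ (fun i => DetAux C T i) (Classical.decPred _) Finset.univ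

lemma mem_clAux {n : ℕ} {A : Type*} {C : Finset (Fin n → A)} {T : Finset (Fin n)} {i : Fin n} :
    i ∈ clAux C T ↔ DetAux C T i := by
  simp [clAux]

lemma subset_clAux {n : ℕ} {A : Type*} (C : Finset (Fin n → A)) (T : Finset (Fin n)) :
    T ⊆ clAux C T := by
  intro i hi
  rw [mem_clAux]
  exact fun c _ d _ h => h i hi

lemma detAux_mono {n : ℕ} {A : Type*} {C : Finset (Fin n → A)} {T T' : Finset (Fin n)} {i : Fin n}
    (hTT : T ⊆ T') (h : DetAux C T i) : DetAux C T' i :=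
  fun c hc d hd hagree => h c hc d hd (fun j hj => hagree j (hTT hj))

lemma clAux_mono {n : ℕ} {A : Type*} {C : Finset (Fin n → A)} {T T' : Finset (Fin n)}
    (hTT : T ⊆ T') : clAux C T ⊆ clAux C T' := by
  intro i hi
  rw [mem_clAux] at hi ⊢
  exact detAux_mono hTT hi

lemma detAux_trans {n : ℕ} {A : Type*} {C : Finset (Fin n → A)} {T S : Finset (Fin n)} {i : Fin n}
    (hS : ∀ j ∈ S, DetAux C T j) (hi : DetAux C S i) : DetAux C T i := by
  intro c hc d hd hagree
  exact hi c hc d hd (fun j hj => hS j hj c hc d hd hagree)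

/-- From the cardinality-equality form of locality, derive functional determination. -/
lemma detAux_of_card {n : ℕ} {A : Type*} [DecidableEq A] {C : Finset (Fin n → A)}
    {S : Finset (Fin n)} {i : Fin n}
    (h : (C.image (fun c => fun j : S => c j.val)).card =
      (C.image (fun c => fun j : (insert i S : Finset (Fin n)) => c j.val)).card) :
    DetAux C S i := by
  classical
  set g := fun (c : Fin n → A) => fun j : (insert i S : Finset (Fin n)) => c j.val with hg
  set h' := fun (f : {x : Fin n // x ∈ insert i S} → A) =>
    fun j : S => f ⟨j.val, Finset.mem_insert_of_mem j.2⟩ with hh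
  have himg : (C.image g).image h' = C.image (fun c => fun j : S => c j.val) := by
    rw [Finset.image_image]
    rfl
  have hcard : ((C.image g).image h').card = (C.image g).card := by
    rw [himg, h]
  have hinj : Set.InjOn h' (C.image g) := (Finset.card_image_iff).mp hcard
  intro c hc d hd hagree
  have hgc : g c ∈ C.image g := Finset.mem_image_of_mem g hc
  have hgd : g d ∈ C.image g := Finset.mem_image_of_mem g hd
  have : h' (g c) = h' (g d) := by
    funext j
    exact hagree j.val j.2
  have := hinj hgc hgd this
  have := congrFun this ⟨i, Finset.mem_insert_self i S⟩
  exact this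

/-- If every coordinate is determined by `T`, then `T` is an information set. -/
lemma infoSet_of_detAux {n : ℕ} {A : Type*} [DecidableEq A] {C : Finset (Fin n → A)}
    {T : Finset (Fin n)} (h : ∀ i, DetAux C T i) :
    (C.image (fun c => fun j : T => c j.val)).card = C.card := by
  rw [Finset.card_image_iff]
  intro c hc d hd heq
  funext i
  exact h i c hc d hd (fun j hj => congrFun heq ⟨j, hj⟩)

lemma main_rec {n r : ℕ} {A : Type*} [Fintype A] [DecidableEq A] (C : Finset (Fin n → A))
    (hloc : ∀ i : Fin n, ∃ S : Finset (Fin n), i ∉ S ∧ S.card ≤ r ∧ DetAux C S i) :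
    ∀ m (T : Finset (Fin n)), n - (clAux C T).card ≤ m →
      T.card * (r + 1) ≤ (clAux C T).card * r →
      ∃ U : Finset (Fin n), U.card * (r + 1) ≤ n * r ∧ ∀ i, DetAux C U i := by
  intro m
  induction m with
  | zero =>
    intro T hm hcount
    refine ⟨T, ?_, ?_⟩
    · calc T.card * (r + 1) ≤ (clAux C T).card * r := hcount
        _ ≤ n * r := by
          have : (clAux C T).card ≤ n := by
            simpa using Finset.card_le_card (Finset.subset_univ (clAux C T))
          exact Nat.mul_le_mul_right r this
    · intro i
      have hcl : (clAux C T).card = n := by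
        have h1 : (clAux C T).card ≤ n := by
          simpa using Finset.card_le_card (Finset.subset_univ (clAux C T))
        omega
      have : clAux C T = Finset.univ := by
        apply Finset.eq_univ_of_card
        simpa using hcl
      have : i ∈ clAux C T := this ▸ Finset.mem_univ i
      exact mem_clAux.mp this
  | succ m ih =>
    intro T hm hcount
    by_cases hall : ∀ i, i ∈ clAux C T
    · refine ⟨T, ?_, fun i => mem_clAux.mp (hall i)⟩
      calc T.card * (r + 1) ≤ (clAux C T).card * r := hcount
        _ ≤ n * r := by
          have : (clAux C T).card ≤ n := by
            simpa using Finset.card_le_card (Finset.subset_univ (clAux C T))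
          exact Nat.mul_le_mul_right r this
    · push_neg at hall
      obtain ⟨i, hi⟩ := hall
      obtain ⟨S, hiS, hSr, hdet⟩ := hloc i
      set T' := T ∪ (S \ clAux C T) with hT'
      have hTT' : T ⊆ T' := Finset.subset_union_left
      -- closure of T' contains cl T, S \ cl T, and i
      have hclsub : clAux C T ⊆ clAux C T' := clAux_mono hTT'
      have hSsub : S \ clAux C T ⊆ clAux C T' :=
        fun j hj => subset_clAux C T' (Finset.mem_union_right _ hj)
      have hiT' : i ∈ clAux C T' := by
        rw [mem_clAux]
        apply detAux_trans (S := S) _ hdet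
        intro j hj
        by_cases hjc : j ∈ clAux C T
        · exact mem_clAux.mp (hclsub hjc)
        · exact mem_clAux.mp (hSsub (Finset.mem_sdiff.mpr ⟨hj, hjc⟩))
      have hbig : insert i (clAux C T ∪ (S \ clAux C T)) ⊆ clAux C T' := by
        intro j hj
        rcases Finset.mem_insert.mp hj with h | h
        · exact h ▸ hiT'
        · rcases Finset.mem_union.mp h with h | h
          · exact hclsub h
          · exact hSsub h
      set a := (S \ clAux C T).card with ha
      have har : a ≤ r := le_trans (Finset.card_le_card (Finset.sdiff_subset)) hSr
      have hiun : i ∉ clAux C T ∪ (S \ clAux C T) := by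
        rw [Finset.mem_union]
        rintro (h | h)
        · exact hi h
        · exact hiS (Finset.mem_sdiff.mp h).1
      have hdisj : Disjoint (clAux C T) (S \ clAux C T) := by
        exact Finset.disjoint_sdiff
      have hcard_big : (insert i (clAux C T ∪ (S \ clAux C T))).card =
          (clAux C T).card + a + 1 := by
        rw [Finset.card_insert_of_notMem hiun, Finset.card_union_of_disjoint hdisj]
      have hclT' : (clAux C T).card + a + 1 ≤ (clAux C T').card := by
        rw [← hcard_big]
        exact Finset.card_le_card hbig
      have hT'card : T'.card ≤ T.card + a := by
        calc T'.card ≤ T.card + (S \ clAux C T).card := Finset.card_union_le _ _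
          _ = T.card + a := rfl
      apply ih T'
      · omega
      · calc T'.card * (r + 1) ≤ (T.card + a) * (r + 1) := Nat.mul_le_mul_right _ hT'card
          _ = T.card * (r + 1) + a * (r + 1) := by ring
          _ ≤ (clAux C T).card * r + (a * r + r) := by
            have : a * (r + 1) ≤ a * r + r := by nlinarith
            omega
          _ = ((clAux C T).card + a + 1) * r := by ring
          _ ≤ (clAux C T').card * r := Nat.mul_le_mul_right r hclT'

/-- Every code C ⊆ A^n with locality r satisfies κ/n ≤ r/(r+1), i.e. κ(r+1) ≤ nr, where κ is
the minimum size of an information set of C. -/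
theorem stmt10 (n r κ : ℕ) (A : Type*) [Fintype A] [DecidableEq A]
    (C : Finset (Fin n → A))
    (hloc : ∀ i : Fin n, ∃ S : Finset (Fin n), i ∉ S ∧ S.card ≤ r ∧
      (C.image (fun c => fun j : S => c j.val)).card =
        (C.image (fun c => fun j : (insert i S : Finset (Fin n)) => c j.val)).card)
    (hκ : IsLeast {k | ∃ S : Finset (Fin n), S.card = k ∧
      (C.image (fun c => fun j : S => c j.val)).card = C.card} κ) :
    κ * (r + 1) ≤ n * r := by
  have hloc' : ∀ i : Fin n, ∃ S : Finset (Fin n), i ∉ S ∧ S.card ≤ r ∧ DetAux C S i := by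
    intro i
    obtain ⟨S, h1, h2, h3⟩ := hloc i
    exact ⟨S, h1, h2, detAux_of_card h3⟩
  obtain ⟨U, hU, hUdet⟩ := main_rec C hloc' n ∅ (by omega) (by simp)
  have hκU : κ ≤ U.card := hκ.2 ⟨U, rfl, infoSet_of_detAux hUdet⟩
  calc κ * (r + 1) ≤ U.card * (r + 1) := Nat.mul_le_mul_right _ hκU
    _ ≤ n * r := hU
end

section
/- Let C be a code of length n over a finite alphabet with locality r, minimum Hamming distance d, and minimum information set size κ. Then d ≤ n - κ - ⌈κ/r⌉ + 2. -/
open Finset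

namespace LRC11

variable {n : ℕ} {A : Type*} [Fintype A] [DecidableEq A]

/-- Projection of the code to a set of coordinates. -/
abbrev pr (C : Finset (Fin n → A)) (S : Finset (Fin n)) : Finset (S → A) :=
  C.image (fun c => fun j : S => c j.val)

/-- Agreement on `S` implies agreement on `T` (for codewords). -/
def AIn (C : Finset (Fin n → A)) (S T : Finset (Fin n)) : Prop :=
  ∀ c₁ ∈ C, ∀ c₂ ∈ C, (∀ j ∈ S, c₁ j = c₂ j) → ∀ j ∈ T, c₁ j = c₂ j

theorem pr_map {C : Finset (Fin n → A)} {S T : Finset (Fin n)} (hST : S ⊆ T) :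
    (pr C T).image (fun f (j : S) => f ⟨j.1, hST j.2⟩) = pr C S := by
  rw [pr, pr, Finset.image_image]
  rfl

theorem pr_card_le {C : Finset (Fin n → A)} {S T : Finset (Fin n)} (hST : S ⊆ T) :
    (pr C S).card ≤ (pr C T).card := by
  rw [← pr_map hST]; exact Finset.card_image_le

theorem pr_card_le_C {C : Finset (Fin n → A)} {S : Finset (Fin n)} :
    (pr C S).card ≤ C.card := Finset.card_image_le

theorem AIn_of_card_eq {C : Finset (Fin n → A)} {S T : Finset (Fin n)} (hST : S ⊆ T)
    (h : (pr C S).card = (pr C T).card) : AIn C S T := by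
  have hinj : Set.InjOn (fun (f : T → A) (j : S) => f ⟨j.1, hST j.2⟩) ↑(pr C T) := by
    apply Finset.injOn_of_card_image_eq
    rw [pr_map hST, ← h]
  intro c₁ h₁ c₂ h₂ hag j hj
  have e : (fun (j : T) => c₁ j.1) = fun (j : T) => c₂ j.1 := by
    apply hinj (Finset.mem_image_of_mem _ h₁) (Finset.mem_image_of_mem _ h₂)
    funext jS
    exact hag jS.1 jS.2
  exact congrFun e ⟨j, hj⟩

theorem card_eq_of_AIn {C : Finset (Fin n → A)} {S T : Finset (Fin n)} (hST : S ⊆ T)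
    (h : AIn C S T) : (pr C S).card = (pr C T).card := by
  refine le_antisymm (pr_card_le hST) ?_
  rw [← pr_map hST]
  refine ge_of_eq (Finset.card_image_of_injOn ?_)
  intro f₁ hf₁ f₂ hf₂ he
  obtain ⟨c₁, h₁, rfl⟩ := Finset.mem_image.mp (Finset.mem_coe.mp hf₁)
  obtain ⟨c₂, h₂, rfl⟩ := Finset.mem_image.mp (Finset.mem_coe.mp hf₂)
  have hag : ∀ j ∈ S, c₁ j = c₂ j := by
    intro j hj
    exact congrFun he ⟨j, hj⟩
  funext jT
  exact h c₁ h₁ c₂ h₂ hag jT.1 jT.2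

theorem exists_pair {C : Finset (Fin n → A)} {S : Finset (Fin n)}
    (h : (pr C S).card < C.card) :
    ∃ c₁ ∈ C, ∃ c₂ ∈ C, c₁ ≠ c₂ ∧ ∀ j ∈ S, c₁ j = c₂ j := by
  by_contra hcon
  push_neg at hcon
  have hinj : Set.InjOn (fun (c : Fin n → A) => fun j : S => c j.1) ↑C := by
    intro c₁ h₁ c₂ h₂ he
    by_contra hne
    obtain ⟨j, hj, hne'⟩ := hcon c₁ h₁ c₂ h₂ hne
    exact hne' (congrFun he ⟨j, hj⟩)
  have h2 : (pr C S).card = C.card := Finset.card_image_of_injOn hinj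
  omega

theorem main {r : ℕ} (C : Finset (Fin n → A))
    (hloc : ∀ i : Fin n, ∃ S : Finset (Fin n), i ∉ S ∧ S.card ≤ r ∧
      (pr C S).card = (pr C (insert i S)).card) :
    ∀ fuel T R j, C.card - (pr C T).card ≤ fuel → R ⊆ T → AIn C R T →
      R.card ≤ j * r → R.card + j ≤ T.card → (pr C T).card < C.card →
      ∃ (F : Finset (Fin n)) (k J : ℕ), (pr C F).card < C.card ∧
        (∃ S' : Finset (Fin n), S'.card = k ∧ (pr C S').card = C.card) ∧
        k ≤ J * r ∧ k + J ≤ F.card + 2 := by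
  intro fuel
  induction fuel with
  | zero =>
    intro T R j hf _ _ _ _ hlt
    omega
  | succ fuel ih =>
    intro T R j hf hRT hAInRT hRr hRjT hlt
    obtain ⟨c₁, h₁, c₂, h₂, hne, hag⟩ := exists_pair hlt
    obtain ⟨i, hi⟩ : ∃ i, c₁ i ≠ c₂ i := by
      by_contra hc; push_neg at hc; exact hne (funext hc)
    have hiT : i ∉ T := fun h => hi (hag i h)
    obtain ⟨S, hiS, hSr, hScard⟩ := hloc i
    have hAg_i : ∀ d₁ ∈ C, ∀ d₂ ∈ C, (∀ j ∈ S, d₁ j = d₂ j) → d₁ i = d₂ i := by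
      intro d₁ hd₁ d₂ hd₂ hagS
      exact AIn_of_card_eq (Finset.subset_insert i S) hScard d₁ hd₁ d₂ hd₂ hagS i
        (Finset.mem_insert_self i S)
    set W := S \ T with hWdef
    have hWr : W.card ≤ r := le_trans (Finset.card_le_card Finset.sdiff_subset) hSr
    have hne𝒱 : ((W.powerset).filter (fun V => (pr C (T ∪ V)).card < C.card)).Nonempty := by
      refine ⟨∅, ?_⟩
      rw [Finset.mem_filter, Finset.mem_powerset, Finset.union_empty]
      exact ⟨Finset.empty_subset _, hlt⟩
    obtain ⟨V, hVmem, hVmax⟩ := Finset.exists_max_image _ Finset.card hne𝒱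
    rw [Finset.mem_filter, Finset.mem_powerset] at hVmem
    obtain ⟨hVW, hVlt⟩ := hVmem
    by_cases hcase : V = W
    · -- recurse with T' = insert i (T ∪ S)
      have hTW : T ∪ V = T ∪ S := by
        rw [hcase]; exact Finset.union_sdiff_self_eq_union
      have hiTS : i ∉ T ∪ S := by
        simp only [Finset.mem_union]
        rintro (h | h)
        exacts [hiT h, hiS h]
      have hagS_of : ∀ d₁ ∈ C, ∀ d₂ ∈ C, (∀ j ∈ T, d₁ j = d₂ j) → (∀ j ∈ V, d₁ j = d₂ j) →
          ∀ j ∈ S, d₁ j = d₂ j := by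
        intro d₁ _ d₂ _ hT hV j hj
        by_cases hjT : j ∈ T
        · exact hT j hjT
        · refine hV j ?_
          rw [hcase]
          exact Finset.mem_sdiff.mpr ⟨hj, hjT⟩
      have hAIn2 : AIn C (T ∪ S) (insert i (T ∪ S)) := by
        intro d₁ hd₁ d₂ hd₂ hagTS j hj
        rcases Finset.mem_insert.mp hj with h | h
        · subst h
          exact hAg_i d₁ hd₁ d₂ hd₂ (fun j hj => hagTS j (Finset.mem_union_right _ hj))
        · exact hagTS j h
      have hcard' : (pr C (T ∪ S)).card = (pr C (insert i (T ∪ S))).card :=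
        card_eq_of_AIn (Finset.subset_insert _ _) hAIn2
      have hlt' : (pr C (insert i (T ∪ S))).card < C.card := by
        rw [← hcard', ← hTW]; exact hVlt
      have hAIn' : AIn C (R ∪ V) (insert i (T ∪ S)) := by
        intro d₁ hd₁ d₂ hd₂ hagRV j hj
        have hT : ∀ j ∈ T, d₁ j = d₂ j :=
          hAInRT d₁ hd₁ d₂ hd₂ (fun j hj => hagRV j (Finset.mem_union_left _ hj))
        have hS : ∀ j ∈ S, d₁ j = d₂ j :=
          hagS_of d₁ hd₁ d₂ hd₂ hT (fun j hj => hagRV j (Finset.mem_union_right _ hj))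
        rcases Finset.mem_insert.mp hj with h | h
        · subst h; exact hAg_i d₁ hd₁ d₂ hd₂ hS
        · rcases Finset.mem_union.mp h with h | h
          exacts [hT j h, hS j h]
      have hsubset' : R ∪ V ⊆ insert i (T ∪ S) := by
        apply Finset.Subset.trans ?_ (Finset.subset_insert _ _)
        rw [← hTW]
        exact Finset.union_subset_union hRT Finset.Subset.rfl
      have hstrict : (pr C T).card < (pr C (insert i (T ∪ S))).card := by
        have hle1 : (pr C T).card ≤ (pr C (insert i T)).card :=
          pr_card_le (Finset.subset_insert i T)
        have hle2 : (pr C (insert i T)).card ≤ (pr C (insert i (T ∪ S))).card :=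
          pr_card_le (Finset.insert_subset_insert i Finset.subset_union_left)
        have hneq : (pr C T).card ≠ (pr C (insert i T)).card := by
          intro he
          exact hi (AIn_of_card_eq (Finset.subset_insert i T) he c₁ h₁ c₂ h₂ hag i
            (Finset.mem_insert_self i T))
        omega
      have hTscard : (insert i (T ∪ S)).card = W.card + T.card + 1 := by
        rw [Finset.card_insert_of_notMem hiTS, Finset.union_comm T S,
          ← Finset.card_sdiff_add_card S T, hWdef]
      have hRVcard : (R ∪ V).card ≤ R.card + W.card := by
        have := Finset.card_union_le R V
        rw [hcase] at this ⊢
        exact this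
      apply ih (insert i (T ∪ S)) (R ∪ V) (j + 1) ?_ hsubset' hAIn' ?_ ?_ hlt'
      · have := pr_card_le_C (C := C) (S := insert i (T ∪ S))
        omega
      · have : (j + 1) * r = j * r + r := by ring
        omega
      · omega
    · -- terminal case
      have hVssub : V ⊂ W := ⟨hVW, fun h => hcase (Finset.Subset.antisymm hVW h)⟩
      obtain ⟨u, huW, huV⟩ := Finset.exists_of_ssubset hVssub
      have hVltW : V.card < W.card := Finset.card_lt_card hVssub
      have hXcard : (pr C (insert u (T ∪ V))).card = C.card := by
        rcases lt_or_eq_of_le (pr_card_le_C (C := C) (S := insert u (T ∪ V))) with h | h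
        · exfalso
          have hmem : insert u V ∈ (W.powerset).filter
              (fun V => (pr C (T ∪ V)).card < C.card) := by
            rw [Finset.mem_filter, Finset.mem_powerset]
            constructor
            · exact Finset.insert_subset huW hVW
            · rw [Finset.union_insert]; exact h
          have := hVmax _ hmem
          rw [Finset.card_insert_of_notMem huV] at this
          omega
        · exact h
      have hKsub : insert u (R ∪ V) ⊆ insert u (T ∪ V) :=
        Finset.insert_subset_insert u (Finset.union_subset_union hRT Finset.Subset.rfl)
      have hKAIn : AIn C (insert u (R ∪ V)) (insert u (T ∪ V)) := by
        intro d₁ hd₁ d₂ hd₂ hagK j hj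
        have hT : ∀ j ∈ T, d₁ j = d₂ j :=
          hAInRT d₁ hd₁ d₂ hd₂ (fun j hj =>
            hagK j (Finset.mem_insert_of_mem (Finset.mem_union_left _ hj)))
        rcases Finset.mem_insert.mp hj with h | h
        · subst h; exact hagK j (Finset.mem_insert_self _ _)
        · rcases Finset.mem_union.mp h with h | h
          · exact hT j h
          · exact hagK j (Finset.mem_insert_of_mem (Finset.mem_union_right _ h))
      have hK : (pr C (insert u (R ∪ V))).card = C.card := by
        rw [card_eq_of_AIn hKsub hKAIn]; exact hXcard
      have huT : u ∉ T := (Finset.mem_sdiff.mp huW).2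
      have hdisj : Disjoint T V := by
        rw [Finset.disjoint_right]
        intro a ha
        exact (Finset.mem_sdiff.mp (hVW ha)).2
      have hFcard : (T ∪ V).card = T.card + V.card := Finset.card_union_of_disjoint hdisj
      have hKb : (insert u (R ∪ V)).card ≤ R.card + V.card + 1 :=
        le_trans (Finset.card_insert_le _ _) (by
          have := Finset.card_union_le R V; omega)
      refine ⟨T ∪ V, (insert u (R ∪ V)).card, j + 1, hVlt, ⟨_, rfl, hK⟩, ?_, ?_⟩
      · have : (j + 1) * r = j * r + r := by ring
        omega
      · omega

end LRC11

/-- LRC bound: a code of length n over a finite alphabet with locality r, minimum Hamming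
distance d and minimum information set size κ satisfies d ≤ n - κ - ⌈κ/r⌉ + 2. -/
theorem stmt11 (n r d κ : ℕ) (hr : 0 < r) (A : Type*) [Fintype A] [DecidableEq A]
    (C : Finset (Fin n → A))
    (hloc : ∀ i : Fin n, ∃ S : Finset (Fin n), i ∉ S ∧ S.card ≤ r ∧
      (C.image (fun c => fun j : S => c j.val)).card =
        (C.image (fun c => fun j : (insert i S : Finset (Fin n)) => c j.val)).card)
    (hκ : IsLeast {k | ∃ S : Finset (Fin n), S.card = k ∧
      (C.image (fun c => fun j : S => c j.val)).card = C.card} κ)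
    (hd_le : ∀ c₁ ∈ C, ∀ c₂ ∈ C, c₁ ≠ c₂ → d ≤ hammingDist c₁ c₂)
    (hd_ex : ∃ c₁ ∈ C, ∃ c₂ ∈ C, c₁ ≠ c₂ ∧ hammingDist c₁ c₂ = d) :
    d + κ + (κ + r - 1) / r ≤ n + 2 := by
  classical
  obtain ⟨c₁, h₁, c₂, h₂, hne, -⟩ := hd_ex
  have hC2 : 2 ≤ C.card := by
    rw [show (2:ℕ) = 1 + 1 by rfl]
    exact Finset.one_lt_card.mpr ⟨c₁, h₁, c₂, h₂, hne⟩
  have hempty : (LRC11.pr C ∅).card < C.card := by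
    have : (LRC11.pr C ∅).card ≤ 1 := by
      apply Finset.card_le_one.mpr
      intro a _ b _
      funext j
      exact absurd j.2 (Finset.notMem_empty _)
    omega
  obtain ⟨F, k, J, hFlt, ⟨S', hS'card, hS'⟩, hkJ, hkF⟩ :=
    LRC11.main C hloc C.card ∅ ∅ 0 (Nat.sub_le _ _) Finset.Subset.rfl
      (fun d₁ _ d₂ _ _ j hj => absurd hj (Finset.notMem_empty _))
      (by simp) (by simp) hempty
  have hκk : κ ≤ k := hκ.2 ⟨S', hS'card, hS'⟩
  have hJ : (κ + r - 1) / r ≤ J := by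
    have h1 : (κ + r - 1) / r < J + 1 := by
      rw [Nat.div_lt_iff_lt_mul hr]
      have : (J + 1) * r = J * r + r := by ring
      omega
    omega
  -- two codewords agreeing on F
  obtain ⟨e₁, he₁, e₂, he₂, hene, heag⟩ := LRC11.exists_pair hFlt
  have hdle : d ≤ hammingDist e₁ e₂ := hd_le e₁ he₁ e₂ he₂ hene
  have hdisj : Disjoint ({i | e₁ i ≠ e₂ i} : Finset (Fin n)) F := by
    rw [Finset.disjoint_right]
    intro a ha hafilter
    rw [Finset.mem_filter] at hafilter
    exact hafilter.2 (heag a ha)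
  have hsum : hammingDist e₁ e₂ + F.card ≤ n := by
    rw [hammingDist, ← Finset.card_union_of_disjoint hdisj]
    calc (({i | e₁ i ≠ e₂ i} : Finset (Fin n)) ∪ F).card ≤ (Finset.univ : Finset (Fin n)).card :=
          Finset.card_le_card (Finset.subset_univ _)
      _ = n := by simp
  omega
end

section
/- Let R be a finite chain ring and C an R-linear code of length n and rank K (the minimal K such that C embeds into R^K as an R-module). Then the minimum Hamming distance of C satisfies d ≤ n - K + 1. -/
/-- Generalized Singleton bound: an R-linear code of length n and rank K over a finite chain
ring R has minimum distance d ≤ n - K + 1. -/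
theorem stmt12 (R : Type*) [CommRing R] [IsLocalRing R] [Finite R] [IsPrincipalIdealRing R]
    [DecidableEq R]
    (n K d : ℕ) (C : Submodule R (Fin n → R))
    (hK : IsLeast {k | ∃ φ : C →ₗ[R] (Fin k → R), Function.Injective φ} K)
    (hd : IsLeast {e | ∃ c ∈ C, c ≠ 0 ∧ hammingNorm c = e} d) :
    d + K ≤ n + 1 := by
  obtain ⟨⟨c, hcC, hc0, hcd⟩, hlb⟩ := hd
  have hd1 : 1 ≤ d := by
    rw [← hcd]
    exact Nat.one_le_iff_ne_zero.mpr (hammingNorm_ne_zero_iff.mpr hc0)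
  have hdn : d ≤ n := by
    rw [← hcd]
    simpa using (hammingNorm_le_card_fintype : hammingNorm c ≤ Fintype.card (Fin n))
  set m := n - (d - 1) with hm
  have hmn : m ≤ n := Nat.sub_le _ _
  have key : K ≤ m := by
    apply hK.2
    refine ⟨(LinearMap.funLeft R R (Fin.castLE hmn)).comp C.subtype, ?_⟩
    intro x y hxy
    by_contra hne
    have hz : (x : Fin n → R) - (y : Fin n → R) ∈ C := sub_mem x.2 y.2
    have hz0 : (x : Fin n → R) - (y : Fin n → R) ≠ 0 := sub_ne_zero.mpr (fun h => hne (Subtype.ext h))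
    have hle : d ≤ hammingNorm ((x : Fin n → R) - (y : Fin n → R)) := hlb ⟨_, hz, hz0, rfl⟩
    have hzero : ∀ i : Fin n, i.val < m → ((x : Fin n → R) - (y : Fin n → R)) i = 0 := by
      intro i hi
      have h1 := congrFun hxy ⟨i.val, hi⟩
      have h2 : Fin.castLE hmn ⟨i.val, hi⟩ = i := rfl
      simp only [LinearMap.comp_apply, LinearMap.funLeft_apply, Submodule.subtype_apply,
        h2] at h1
      simp [sub_eq_zero, h1]
    have hcard : hammingNorm ((x : Fin n → R) - (y : Fin n → R)) ≤ n - m := by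
      classical
      have hsub : ({i | ((x : Fin n → R) - (y : Fin n → R)) i ≠ 0} : Finset (Fin n))
          ⊆ ({i : Fin n | ¬ i.val < m} : Finset (Fin n)) := by
        intro i hi
        simp only [Finset.mem_filter, Finset.mem_univ, true_and] at *
        exact fun h => hi (hzero i h)
      calc hammingNorm ((x : Fin n → R) - (y : Fin n → R))
          ≤ ({i : Fin n | ¬ i.val < m} : Finset (Fin n)).card := Finset.card_le_card hsub
        _ = n - m := by
            have := Finset.card_filter_add_card_filter_not
              (s := (Finset.univ : Finset (Fin n))) (p := fun i : Fin n => i.val < m)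
            have hcm : ({i : Fin n | i.val < m} : Finset (Fin n)).card = m := by
              rw [show ({i : Fin n | i.val < m} : Finset (Fin n))
                  = Finset.map (Fin.castLEEmb hmn) Finset.univ from ?_]
              · simp
              · ext i
                simp only [Finset.mem_filter, Finset.mem_univ, true_and, Finset.mem_map,
                  Fin.castLEEmb_apply, Finset.mem_filter]
                constructor
                · intro hi; exact ⟨⟨i.val, hi⟩, rfl⟩
                · rintro ⟨j, rfl⟩; exact j.2
            simp only [Finset.card_univ, Fintype.card_fin] at this
            omega
    omega
  omega
end

section
/- Let R = R_1 × ... × R_w be a finite product of finite chain rings and C = C_1 × ... × C_w ⊆ R^n a product of R_i-linear codes C_i ⊆ R_i^n of rank K_i. Then the rank of C as an R-module (minimum K with an R-module embedding C → R^K) equals max_i K_i. -/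
/-- The rank of a product code C = C₁ × ⋯ × C_w over a finite product of finite chain rings is
the maximum of the ranks of the component codes. -/
theorem stmt14 (w n : ℕ) (hw : 0 < w) (R : Fin w → Type*)
    [∀ i, CommRing (R i)] [∀ i, Finite (R i)] [∀ i, IsLocalRing (R i)]
    [∀ i, IsPrincipalIdealRing (R i)]
    (C : ∀ i, Submodule (R i) (Fin n → R i)) (K : Fin w → ℕ)
    (hK : ∀ i, IsLeast {k | ∃ φ : (C i) →ₗ[R i] (Fin k → R i), Function.Injective φ} (K i))
    (Cprod : Submodule (∀ i, R i) (Fin n → ∀ i, R i))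
    (hCprod : ∀ x : Fin n → ∀ i, R i, x ∈ Cprod ↔ ∀ i, (fun j => x j i) ∈ C i)
    (Kp : ℕ)
    (hKp : IsLeast {k | ∃ φ : Cprod →ₗ[∀ i, R i] (Fin k → ∀ i, R i),
      Function.Injective φ} Kp) :
    Kp = ⨆ i, K i := by
  classical
  haveI : Nonempty (Fin w) := Fin.pos_iff_nonempty.mp hw
  set M := ⨆ i, K i with hM
  have hKM : ∀ i, K i ≤ M := fun i => le_ciSup (Finite.bddAbove_range K) i
  choose φ hφ using fun i => (hK i).1
  have projmem : ∀ (x : Cprod) (i : Fin w),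
      (fun j => (x : Fin n → ∀ i, R i) j i) ∈ C i :=
    fun x i => (hCprod x.1).mp x.2 i
  let proj : ∀ i, Cprod → C i :=
    fun i x => ⟨fun j => (x : Fin n → ∀ i, R i) j i, projmem x i⟩
  -- upper bound : Kp ≤ M
  have hΦadd : ∀ (i : Fin w) (x y : Cprod), proj i (x + y) = proj i x + proj i y :=
    fun i x y => rfl
  have hΦsmul : ∀ (i : Fin w) (r : ∀ i, R i) (x : Cprod),
      proj i (r • x) = r i • proj i x := fun i r x => rfl
  let Φ : Cprod →ₗ[∀ i, R i] (Fin M → ∀ i, R i) :=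
    { toFun := fun x k i => if h : (k : ℕ) < K i then φ i (proj i x) ⟨k, h⟩ else 0
      map_add' := by
        intro x y
        funext k i
        simp only [hΦadd, map_add, Pi.add_apply]
        split <;> simp
      map_smul' := by
        intro r x
        funext k i
        simp only [hΦsmul, map_smul, RingHom.id_apply, Pi.smul_apply]
        by_cases h : (k : ℕ) < K i <;> simp [h, smul_eq_mul] }
  have hΦinj : Function.Injective Φ := by
    rw [injective_iff_map_eq_zero]
    intro x hx
    have hproj : ∀ i, proj i x = 0 := by
      intro i
      apply hφ i
      rw [map_zero]
      funext k
      have hk : ((⟨(k : ℕ), lt_of_lt_of_le k.isLt (hKM i)⟩ : Fin M) : ℕ) < K i := k.isLt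
      have := congrFun (congrFun hx ⟨(k : ℕ), lt_of_lt_of_le k.isLt (hKM i)⟩) i
      simpa [Φ, dif_pos hk] using this
    ext j i
    have := congrArg Subtype.val (hproj i)
    exact congrFun this j
  have h1 : Kp ≤ M := hKp.2 ⟨Φ, hΦinj⟩
  -- lower bound : K i ≤ Kp for all i
  obtain ⟨ψ, hψ⟩ := hKp.1
  have h2 : ∀ i, K i ≤ Kp := by
    intro i
    have memb : ∀ c : C i,
        (fun j => (Pi.single i ((c : Fin n → R i) j) : ∀ i', R i')) ∈ Cprod := by
      intro c
      rw [hCprod]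
      intro i'
      by_cases h : i' = i
      · subst h; simpa using c.2
      · simp only [Pi.single_eq_of_ne h]
        exact (C i').zero_mem
    let E : C i → Cprod := fun c =>
      ⟨fun j => (Pi.single i ((c : Fin n → R i) j) : ∀ i', R i'), memb c⟩
    have hEsmul : ∀ (r : R i) (c : C i),
        E (r • c) = (Pi.single i r : ∀ i', R i') • E c := by
      intro r c
      apply Subtype.ext
      funext j i'
      by_cases h : i' = i
      · subst h; simp [E, Pi.single_eq_same, mul_comm]
      · simp [E, Pi.single_eq_of_ne h]
    have hEone : ∀ c : C i, E c = (Pi.single i (1 : R i) : ∀ i', R i') • E c := by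
      intro c
      have := hEsmul 1 c
      rwa [one_smul] at this
    let L : C i →ₗ[R i] (Fin Kp → R i) :=
      { toFun := fun c k => (ψ (E c)) k i
        map_add' := by
          intro c c'
          have : E (c + c') = E c + E c' := by
            apply Subtype.ext
            funext j
            simp [E, Pi.single_add]
          funext k
          simp [this, map_add]
        map_smul' := by
          intro r c
          funext k
          show ψ (E (r • c)) k i = r • ψ (E c) k i
          rw [hEsmul, map_smul]
          simp [Pi.single_eq_same, smul_eq_mul] }
    have hLinj : Function.Injective L := by
      rw [injective_iff_map_eq_zero]
      intro c hc
      have hzero : ψ (E c) = 0 := by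
        funext k i'
        by_cases h : i' = i
        · subst h
          exact congrFun hc k
        · have h1' := congrFun (congrFun (congrArg ψ (hEone c)) k) i'
          rw [map_smul] at h1'
          have h0 : (Pi.single i (1 : R i) : ∀ i', R i') i' = 0 :=
            Pi.single_eq_of_ne h 1
          simp only [Pi.smul_apply, smul_eq_mul, Pi.mul_apply] at h1'
          rw [h0, zero_mul] at h1'
          simpa using h1'
      have : E c = 0 := hψ (by rw [hzero, map_zero])
      apply Subtype.ext
      funext j
      have := congrFun (congrArg Subtype.val this) j
      have := congrFun this i
      simpa [E, Pi.single_eq_same] using this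
    exact (hK i).2 ⟨L, hLinj⟩
  exact le_antisymm h1 (ciSup_le h2)
end

section
/- Let R be a commutative ring, A a subtractive subset partitioned into blocks A_1,...,A_l, and suppose g is a polynomial of degree < |A| taking value c_i on each block A_i, where {c_1,...,c_l} is itself a subtractive set in R. Then 1, g, g^2 mod h, ..., g^{l-1} mod h form a basis of the free R-module F_A of rank l, where h is the annihilator polynomial of A and powers are reduced modulo h. -/
open Polynomial Matrix

theorem aux_vanish (R : Type*) [CommRing R] (n : ℕ) (v : Fin n → R)
    (hu : ∀ i j, i ≠ j → IsUnit (v i - v j)) (p : R[X]) (hdeg : p.degree < (n : ℕ))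
    (hev : ∀ i, p.eval (v i) = 0) : p = 0 := by
  by_cases hp : p = 0
  · exact hp
  set M := Matrix.vandermonde v with hM
  have hdet : IsUnit M.det := by
    rw [hM, Matrix.det_vandermonde]
    refine Finset.prod_induction _ IsUnit (fun a b => IsUnit.mul) isUnit_one fun i _ => ?_
    refine Finset.prod_induction _ IsUnit (fun a b => IsUnit.mul) isUnit_one fun j hj => ?_
    exact hu j i (Finset.mem_Ioi.mp hj).ne'
  set w : Fin n → R := fun j => p.coeff j with hw
  have hMw : M.mulVec w = 0 := by
    funext i
    have hnd : p.natDegree < n := (Polynomial.natDegree_lt_iff_degree_lt hp).mpr hdeg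
    have he : p.eval (v i) = ∑ j ∈ Finset.range n, p.coeff j * v i ^ j :=
      Polynomial.eval_eq_sum_range' hnd _
    rw [Finset.sum_range fun j => p.coeff j * v i ^ j] at he
    have : M.mulVec w i = ∑ j : Fin n, p.coeff j * v i ^ (j : ℕ) := by
      simp [Matrix.mulVec, dotProduct, hM, hw, Matrix.vandermonde, mul_comm]
    rw [this, ← he, hev i]; rfl
  have hw0 : w = 0 := by
    have h1 := Matrix.nonsing_inv_mul M hdet
    calc w = (M⁻¹ * M).mulVec w := by rw [h1, Matrix.one_mulVec]
    _ = M⁻¹.mulVec (M.mulVec w) := by rw [Matrix.mulVec_mulVec]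
    _ = 0 := by rw [hMw, Matrix.mulVec_zero]
  ext k
  rcases lt_or_ge k n with hk | hk
  · simpa using congrFun hw0 ⟨k, hk⟩
  · simp [Polynomial.coeff_eq_zero_of_degree_lt (lt_of_lt_of_le hdeg (by exact_mod_cast hk))]

theorem aux_vanish' (R : Type*) [CommRing R] (A : Finset R)
    (hsub : ∀ a ∈ A, ∀ b ∈ A, a ≠ b → IsUnit (a - b)) (p : R[X])
    (hdeg : p.degree < (A.card : ℕ)) (hev : ∀ a ∈ A, p.eval a = 0) : p = 0 := by
  set v : Fin A.card → R := fun i => (A.equivFin.symm i : R) with hv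
  refine aux_vanish R A.card v (fun i j hij => ?_) p hdeg fun i => hev _ (A.equivFin.symm i).2
  refine hsub _ (A.equivFin.symm i).2 _ (A.equivFin.symm j).2 fun h => hij ?_
  exact A.equivFin.symm.injective (Subtype.ext h)

/-- If g ∈ R[x] has degree < |A|, is constant with value c_i on each block A_i of a partition
of a subtractive set A, and {c₁,…,c_l} is itself subtractive, then the reduced powers
1, g, …, g^{l-1} (mod the annihilator h of A) form a basis of the R-module F_A. -/
theorem stmt16 (R : Type*) [CommRing R] [DecidableEq R] (l : ℕ) (A : Finset R) (B : Fin l → Finset R)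
    (hsub : ∀ a ∈ A, ∀ b ∈ A, a ≠ b → IsUnit (a - b))
    (hne : ∀ i, (B i).Nonempty)
    (hdisj : ∀ i j, i ≠ j → Disjoint (B i) (B j))
    (hunion : A = Finset.univ.biUnion B)
    (g : Polynomial R) (hgdeg : g.degree < (A.card : ℕ))
    (c : Fin l → R) (hgc : ∀ i, ∀ a ∈ B i, g.eval a = c i)
    (hcsub : ∀ i j, i ≠ j → IsUnit (c i - c j)) :
    ∀ f : Polynomial R, f.degree < (A.card : ℕ) →
      (∀ i, ∃ e : R, ∀ a ∈ B i, f.eval a = e) →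
      ∃! coef : Fin l → R,
        f = ∑ i : Fin l, coef i • (g ^ (i : ℕ) %ₘ (∏ a ∈ A, (Polynomial.X - Polynomial.C a))) := by
  rcases subsingleton_or_nontrivial R with hT | hT
  · intro f _ _
    exact ⟨0, Subsingleton.elim _ _, fun y _ => Subsingleton.elim _ _⟩
  intro f hfdeg hconst
  choose e he using hconst
  set h : R[X] := ∏ a ∈ A, (Polynomial.X - Polynomial.C a) with hh
  have hmonic : h.Monic := Polynomial.monic_prod_of_monic _ _ fun a _ => monic_X_sub_C a
  have hdegh : h.degree = (A.card : ℕ) := by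
    have hnd : h.natDegree = A.card := by
      rw [hh, Polynomial.natDegree_prod_of_monic _ _ fun a _ => monic_X_sub_C a]
      simp
    rw [Polynomial.degree_eq_natDegree hmonic.ne_zero, hnd]
  -- membership facts
  have hmemA : ∀ j, ∀ a ∈ B j, a ∈ A := fun j a ha => by
    rw [hunion]; exact Finset.mem_biUnion.mpr ⟨j, Finset.mem_univ j, ha⟩
  have hevalh : ∀ a ∈ A, h.eval a = 0 := by
    intro a ha
    rw [hh, Polynomial.eval_prod]
    exact Finset.prod_eq_zero ha (by simp)
  -- evaluation of the reduced powers
  have hq : ∀ (i : Fin l) (j : Fin l), ∀ a ∈ B j,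
      (g ^ (i : ℕ) %ₘ h).eval a = c j ^ (i : ℕ) := by
    intro i j a ha
    have h0 := hevalh a (hmemA j a ha)
    conv_rhs => rw [← hgc j a ha]
    rw [← Polynomial.eval_pow]
    conv_rhs => rw [← Polynomial.modByMonic_add_div (g ^ (i : ℕ)) h]
    simp [h0]
  -- Vandermonde matrix on c
  set W : Matrix (Fin l) (Fin l) R := Matrix.vandermonde c with hW
  have hdetW : IsUnit W.det := by
    rw [hW, Matrix.det_vandermonde]
    refine Finset.prod_induction _ IsUnit (fun a b => IsUnit.mul) isUnit_one fun i _ => ?_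
    refine Finset.prod_induction _ IsUnit (fun a b => IsUnit.mul) isUnit_one fun j hj => ?_
    exact hcsub j i (Finset.mem_Ioi.mp hj).ne'
  -- evaluation of a general combination
  have hevalsum : ∀ (co : Fin l → R) (j : Fin l), ∀ a ∈ B j,
      (∑ i : Fin l, co i • (g ^ (i : ℕ) %ₘ h)).eval a = W.mulVec co j := by
    intro co j a ha
    rw [Polynomial.eval_finset_sum]
    simp only [Polynomial.eval_smul, smul_eq_mul]
    rw [Finset.sum_congr rfl fun i _ => by rw [hq i j a ha]]
    simp [Matrix.mulVec, dotProduct, hW, Matrix.vandermonde, mul_comm]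
  -- degree of a general combination
  have hdegsum : ∀ co : Fin l → R,
      (∑ i : Fin l, co i • (g ^ (i : ℕ) %ₘ h)).degree < (A.card : ℕ) := by
    intro co
    refine lt_of_le_of_lt (Polynomial.degree_sum_le _ _) ?_
    rw [Finset.sup_lt_iff (by exact WithBot.bot_lt_coe _)]
    intro i _
    refine lt_of_le_of_lt (Polynomial.degree_smul_le _ _) ?_
    rw [← hdegh]
    exact Polynomial.degree_modByMonic_lt _ hmonic
  -- the solution
  set coef : Fin l → R := W⁻¹.mulVec e with hcoef
  have hWcoef : W.mulVec coef = e := by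
    rw [hcoef, Matrix.mulVec_mulVec, Matrix.mul_nonsing_inv _ hdetW, Matrix.one_mulVec]
  have hcancel : ∀ co : Fin l → R, W⁻¹.mulVec (W.mulVec co) = co := by
    intro co
    rw [Matrix.mulVec_mulVec, Matrix.nonsing_inv_mul _ hdetW, Matrix.one_mulVec]
  refine ⟨coef, ?_, ?_⟩
  · -- existence
    have hz : f - ∑ i : Fin l, coef i • (g ^ (i : ℕ) %ₘ h) = 0 := by
      refine aux_vanish' R A hsub _
        (lt_of_le_of_lt (Polynomial.degree_sub_le _ _) (max_lt hfdeg (hdegsum coef))) ?_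
      intro a ha
      obtain ⟨j, _, haj⟩ := Finset.mem_biUnion.mp (hunion ▸ ha)
      rw [Polynomial.eval_sub, hevalsum coef j a haj, hWcoef, he j a haj, sub_self]
    exact (sub_eq_zero.mp hz)
  · -- uniqueness
    intro co hco
    have hWco : W.mulVec co = e := by
      funext j
      obtain ⟨a, ha⟩ := hne j
      rw [← hevalsum co j a ha, ← hco, he j a ha]
    rw [← hcancel co, hWco, hcoef]
end

section
/- Let R be a commutative ring and let A = ∪_{i=1}^l A_i be a subtractive set with |A_i| = r+1 for all i. Suppose g ∈ R[x] is a monic polynomial of degree r+1 with g constant on each A_i. Then for distinct i, j, the values g(A_i) and g(A_j) are distinct; in fact g(A_i) - g(A_j) cannot annihilate any nonzero element of R when R is a finite chain ring (i.e., the values form a subtractive set). -/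
open Polynomial

lemma aux_dvd {R : Type*} [CommRing R] [DecidableEq R] (s : Finset R) (h : Polynomial R)
    (hroot : ∀ a ∈ s, h.eval a = 0)
    (hunit : ∀ a ∈ s, ∀ b ∈ s, a ≠ b → IsUnit (a - b)) :
    (∏ a ∈ s, (X - C a)) ∣ h := by
  induction s using Finset.induction generalizing h with
  | empty => simp
  | @insert a s ha ih =>
    have h1 : (X - C a) ∣ h := dvd_iff_isRoot.mpr (hroot a (Finset.mem_insert_self a s))
    obtain ⟨h', rfl⟩ := h1
    rw [Finset.prod_insert ha]
    refine mul_dvd_mul_left _ (ih h' (fun b hb => ?_) (fun x hx y hy hxy =>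
      hunit x (Finset.mem_insert_of_mem hx) y (Finset.mem_insert_of_mem hy) hxy))
    have hb0 := hroot b (Finset.mem_insert_of_mem hb)
    have hba : b ≠ a := fun e => ha (e ▸ hb)
    have hu : IsUnit (b - a) := hunit b (Finset.mem_insert_of_mem hb) a
      (Finset.mem_insert_self a s) hba
    simp only [eval_mul, eval_sub, eval_X, eval_C] at hb0
    exact (hu.mul_right_eq_zero).mp hb0

lemma aux_eq {R : Type*} [CommRing R] [DecidableEq R] [Nontrivial R] (s : Finset R)
    (h : Polynomial R) (hm : h.Monic) (hd : h.natDegree = s.card)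
    (hroot : ∀ a ∈ s, h.eval a = 0)
    (hunit : ∀ a ∈ s, ∀ b ∈ s, a ≠ b → IsUnit (a - b)) :
    h = ∏ a ∈ s, (X - C a) := by
  obtain ⟨q, hq⟩ := aux_dvd s h hroot hunit
  have hPm : (∏ a ∈ s, (X - C a)).Monic := monic_prod_of_monic _ _ (fun a _ => monic_X_sub_C a)
  have hPd : (∏ a ∈ s, (X - C a)).natDegree = s.card := natDegree_prod_of_monic _ _
      (fun a _ => monic_X_sub_C a) |>.trans (by simp)
  have hq0 : q ≠ 0 := by
    rintro rfl
    simp only [mul_zero] at hq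
    exact hm.ne_zero hq
  have hdq : h.natDegree = (∏ a ∈ s, (X - C a)).natDegree + q.natDegree := by
    rw [hq, hPm.natDegree_mul' (by simpa using hq0)]
  have hqd0 : q.natDegree = 0 := by omega
  have hqm : q.Monic := hPm.of_mul_monic_left (hq ▸ hm)
  have : q = 1 := hqm.natDegree_eq_zero.mp hqd0
  rw [hq, this, mul_one]

/-- If g is a monic polynomial of degree r+1 over a finite chain ring R, constant on each block
of a partition of a subtractive set A into blocks of size r+1, then the values of g on
distinct blocks are distinct and their differences are units (they form a subtractive set). -/
theorem stmt17 (R : Type*) [CommRing R] [DecidableEq R] [IsLocalRing R] [Finite R] [IsPrincipalIdealRing R]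
    (l r : ℕ) (A : Finset R) (B : Fin l → Finset R)
    (hsub : ∀ a ∈ A, ∀ b ∈ A, a ≠ b → IsUnit (a - b))
    (hcard : ∀ i, (B i).card = r + 1)
    (hdisj : ∀ i j, i ≠ j → Disjoint (B i) (B j))
    (hunion : A = Finset.univ.biUnion B)
    (g : Polynomial R) (hmonic : g.Monic) (hdeg : g.natDegree = r + 1)
    (c : Fin l → R) (hgc : ∀ i, ∀ a ∈ B i, g.eval a = c i)
    (i j : Fin l) (hij : i ≠ j) :
    c i ≠ c j ∧ IsUnit (c i - c j) := by
  have hBA : ∀ k, B k ⊆ A := fun k x hx => by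
    rw [hunion]; exact Finset.mem_biUnion.mpr ⟨k, Finset.mem_univ k, hx⟩
  set h : Polynomial R := g - C (c i) with hh
  have hhm : h.Monic := by
    have hgd : g.degree = ((r + 1 : ℕ) : WithBot ℕ) := by
      rw [degree_eq_natDegree hmonic.ne_zero, hdeg]
    have : (-C (c i)).degree < g.degree := by
      calc (-C (c i)).degree ≤ 0 := by simpa using degree_C_le
      _ < g.degree := by rw [hgd]; exact_mod_cast Nat.succ_pos r
    have := hmonic.add_of_left this
    simpa [hh, sub_eq_add_neg] using this
  have hhd : h.natDegree = r + 1 := by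
    rw [hh]
    rw [natDegree_sub_C, hdeg]
  have heq : h = ∏ a ∈ B i, (X - C a) :=
    aux_eq _ _ hhm (by rw [hhd, hcard]) (fun a ha => by simp [hh, hgc i a ha])
      (fun x hx y hy hxy => hsub x (hBA i hx) y (hBA i hy) hxy)
  obtain ⟨b, hb⟩ := Finset.card_pos.mp (by rw [hcard j]; omega)
  have hev : h.eval b = c j - c i := by simp [hh, hgc j b hb]
  have hune : IsUnit (c j - c i) := by
    rw [← hev, heq]
    rw [eval_prod]
    refine Finset.prod_induction _ IsUnit (fun x y => IsUnit.mul) isUnit_one (fun a ha => ?_)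
    simp only [eval_sub, eval_X, eval_C]
    refine hsub b (hBA j hb) a (hBA i ha) (fun e => ?_)
    exact (Finset.disjoint_left.mp (hdisj i j hij)) ha (e ▸ hb)
  have hu : IsUnit (c i - c j) := by
    have := hune.neg; simpa using this
  refine ⟨fun e => hu.ne_zero (by rw [e, sub_self]), hu⟩
end
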